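/- arXiv:2008.00433 — 2 statements merged into one kernel-verified Lean document; each statement's English description precedes it below -/
import Mathlib

section
/- Let A(X) = ∑_{i=0}^m a_i X^i and B(X) = ∑_{j=0}^n b_j X^j be polynomials in C[X] of respective degrees m and n. Then the absolute value of their resultant satisfies |Res(A,B)| ≤ (∑_{i=0}^m |a_i|^2)^{n/2} · (∑_{j=0}^n |b_j|^2)^{m/2}. -/
open Polynomial Matrix Finset
open scoped ComplexOrder

open Matrix Finset
open scoped ComplexOrder

lemma amgm_aux {N : ℕ} (hN : 0 < N) (μ : Fin N → ℝ) (hpos : ∀ i, 0 ≤ μ i)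
    (hsum : ∑ i, μ i = N) : ∏ i, μ i ≤ 1 := by
  have hN' : (N : ℝ) ≠ 0 := Nat.cast_ne_zero.mpr hN.ne'
  have h := Real.geom_mean_le_arith_mean_weighted Finset.univ (fun _ => (N : ℝ)⁻¹) μ
    (fun i _ => by positivity) (by simp [Finset.card_univ]; field_simp) (fun i _ => hpos i)
  have hr : ∑ i, (N : ℝ)⁻¹ * μ i = 1 := by
    rw [← Finset.mul_sum, hsum]; field_simp
  rw [hr] at h
  have h2 : (∏ i, μ i ^ ((N : ℝ)⁻¹)) ^ (N : ℕ) ≤ 1 :=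
    pow_le_one₀ (Finset.prod_nonneg fun i _ => Real.rpow_nonneg (hpos i) _) h
  calc ∏ i, μ i = (∏ i, μ i ^ ((N : ℝ)⁻¹)) ^ (N : ℕ) := by
        rw [← Finset.prod_pow]
        refine Finset.prod_congr rfl fun i _ => ?_
        rw [← Real.rpow_natCast (μ i ^ ((N:ℝ)⁻¹)) N, ← Real.rpow_mul (hpos i),
          inv_mul_cancel₀ hN', Real.rpow_one]
    _ ≤ 1 := h2

lemma trace_eq_sum_eigs {N : ℕ} {A : Matrix (Fin N) (Fin N) ℂ} (hA : A.IsHermitian) :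
    A.trace = ∑ i, (hA.eigenvalues i : ℂ) := by
  conv_lhs => rw [hA.spectral_theorem]
  rw [Unitary.conjStarAlgAut_apply, Matrix.trace_mul_cycle, hA.eigenvectorUnitary.2.1, Matrix.one_mul,
    Matrix.trace_diagonal]
  simp

/-- Hadamard's inequality. -/
lemma hadamard_ineq {N : ℕ} (M : Matrix (Fin N) (Fin N) ℂ) :
    ‖M.det‖ ^ 2 ≤ ∏ i, ∑ j, ‖M i j‖ ^ 2 := by
  rcases Nat.eq_zero_or_pos N with hN | hN
  · subst hN; simp [Matrix.det_isEmpty]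
  set d : Fin N → ℝ := fun i => ∑ j, ‖M i j‖ ^ 2 with hd
  have hd0 : ∀ i, 0 ≤ d i := fun i => Finset.sum_nonneg fun j _ => sq_nonneg _
  by_cases hz : ∃ i, d i = 0
  · obtain ⟨i, hi⟩ := hz
    have hrow : ∀ j, M i j = 0 := by
      intro j
      have := (Finset.sum_eq_zero_iff_of_nonneg
        (fun j _ => sq_nonneg (‖M i j‖))).mp hi j (Finset.mem_univ j)
      simpa [pow_eq_zero_iff] using this
    rw [Matrix.det_eq_zero_of_row_eq_zero i hrow]
    simpa using Finset.prod_nonneg fun i _ => hd0 i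
  push_neg at hz
  set v : Fin N → ℂ := fun i => ((Real.sqrt (d i))⁻¹ : ℝ) with hv
  set Nm : Matrix (Fin N) (Fin N) ℂ := Matrix.of fun i j => v i * M i j with hNm
  set H := Nm * Nmᴴ with hH
  have hPSD : H.PosSemidef := Matrix.posSemidef_self_mul_conjTranspose Nm
  have hHerm : H.IsHermitian := hPSD.isHermitian
  have hkey : ∀ i, ((Real.sqrt (d i))⁻¹) ^ 2 * d i = 1 := by
    intro i
    rw [inv_pow, Real.sq_sqrt (hd0 i), inv_mul_cancel₀ (hz i)]
  -- diagonal entries of H are 1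
  have hdiag : ∀ i, H i i = 1 := by
    intro i
    have h1 : H i i = ∑ j, ((((Real.sqrt (d i))⁻¹) ^ 2 * ‖M i j‖ ^ 2 : ℝ) : ℂ) := by
      simp only [hH, Matrix.mul_apply, Matrix.conjTranspose_apply, Complex.mul_conj, hNm,
        Matrix.of_apply, hv]
      refine Finset.sum_congr rfl fun j _ => ?_
      rw [star_mul', Complex.star_def, Complex.conj_ofReal, Complex.sq_norm]
      push_cast [Complex.normSq_eq_conj_mul_self]
      ring
    rw [h1, ← Complex.ofReal_sum, ← Finset.mul_sum]
    norm_cast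
    exact hkey i
  -- trace of H is N
  have htr : H.trace = (N : ℂ) := by
    rw [Matrix.trace]
    simp only [Matrix.diag_apply]
    rw [Finset.sum_congr rfl fun i _ => hdiag i]
    simp
  -- eigenvalues
  set μ := hHerm.eigenvalues with hμ
  have hμ0 : ∀ i, 0 ≤ μ i := fun i => hPSD.eigenvalues_nonneg i
  have hμsum : ∑ i, μ i = N := by
    have := trace_eq_sum_eigs hHerm
    rw [htr] at this
    exact_mod_cast this.symm
  have hμprod : ∏ i, μ i ≤ 1 := amgm_aux hN μ hμ0 hμsum
  -- det H
  have hdetH : H.det = (‖Nm.det‖ ^ 2 : ℝ) := by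
    rw [hH, Matrix.det_mul, Matrix.det_conjTranspose, Complex.star_def, Complex.mul_conj,
      Complex.sq_norm]
  have hdetH' : H.det = ((∏ i, μ i : ℝ) : ℂ) := by
    rw [hHerm.det_eq_prod_eigenvalues]; push_cast; rfl
  have habs : ‖Nm.det‖ ^ 2 = ∏ i, μ i := by
    have := hdetH ▸ hdetH'
    exact_mod_cast this
  -- det Nm = (∏ v i) * det M
  have hdetN : Nm.det = (∏ i, v i) * M.det := Matrix.det_mul_column v M
  have habsN : ‖Nm.det‖ ^ 2 = (∏ i, (d i)⁻¹) * ‖M.det‖ ^ 2 := by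
    rw [hdetN, norm_mul, mul_pow, Complex.norm_prod]
    congr 1
    rw [← Finset.prod_pow]
    refine Finset.prod_congr rfl fun i _ => ?_
    show ‖((((Real.sqrt (d i))⁻¹ : ℝ)) : ℂ)‖ ^ 2 = (d i)⁻¹
    rw [Complex.norm_real, Real.norm_eq_abs, abs_of_nonneg (inv_nonneg.mpr (Real.sqrt_nonneg _)), inv_pow,
      Real.sq_sqrt (hd0 i)]
  -- conclude
  have h1 : (∏ i, (d i)⁻¹) * ‖M.det‖ ^ 2 ≤ 1 := by
    rw [← habsN, habs]; exact hμprod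
  have hprodpos : 0 < ∏ i, d i := Finset.prod_pos fun i _ => (hd0 i).lt_of_ne (Ne.symm (hz i))
  have : ‖M.det‖ ^ 2 ≤ ∏ i, d i := by
    rw [Finset.prod_inv_distrib] at h1
    calc ‖M.det‖ ^ 2 = (∏ i, d i) * ((∏ i, d i)⁻¹ * ‖M.det‖ ^ 2) := by
          field_simp
      _ ≤ (∏ i, d i) * 1 := by
          exact mul_le_mul_of_nonneg_left h1 hprodpos.le
      _ = ∏ i, d i := mul_one _
  exact this

-- generic row-sum lemma: shifted coefficient row
lemma rowsum_aux {q : ℕ} (f : ℕ → ℝ) (a len : ℕ) (h : a + len < q) :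
    ∑ j : Fin q, (if a ≤ (j : ℕ) ∧ (j : ℕ) ≤ a + len then f ((j : ℕ) - a) else 0)
      = ∑ k ∈ Finset.range (len + 1), f k := by
  rw [Fin.sum_univ_eq_sum_range (fun j => if a ≤ j ∧ j ≤ a + len then f (j - a) else 0) q]
  have hsub : Finset.Icc a (a + len) ⊆ Finset.range q := by
    intro x hx
    rw [Finset.mem_Icc] at hx
    exact Finset.mem_range.mpr (lt_of_le_of_lt hx.2 h)
  calc ∑ j ∈ Finset.range q, (if a ≤ j ∧ j ≤ a + len then f (j - a) else 0)
      = ∑ j ∈ Finset.range q, (if j ∈ Finset.Icc a (a + len) then f (j - a) else 0) := by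
        refine Finset.sum_congr rfl fun j _ => ?_
        simp [Finset.mem_Icc]
    _ = ∑ j ∈ Finset.Icc a (a + len), f (j - a) := by
        rw [Finset.sum_ite_mem, Finset.inter_eq_right.mpr hsub]
    _ = ∑ k ∈ Finset.range (len + 1), f k := by
        refine Finset.sum_nbij' (fun j => j - a) (fun k => a + k) ?_ ?_ ?_ ?_ ?_
        · intro j hj; rw [Finset.mem_Icc] at hj
          refine Finset.mem_range.mpr ?_
          beta_reduce; omega
        · intro k hk; rw [Finset.mem_range] at hk
          refine Finset.mem_Icc.mpr ?_
          beta_reduce; omega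
        · intro j hj; rw [Finset.mem_Icc] at hj; beta_reduce; omega
        · intro k hk; rw [Finset.mem_range] at hk; beta_reduce; omega
        · intro j hj; rfl


/-- The Sylvester matrix of two polynomials `A`, `B`, viewed as polynomials of degrees
`m` and `n` respectively: the first `n` rows contain shifted coefficient vectors of `A`
and the last `m` rows contain shifted coefficient vectors of `B`. -/
noncomputable def sylvesterMatrix {R : Type*} [CommRing R] (A B : R[X]) (m n : ℕ) :
    Matrix (Fin (n + m)) (Fin (n + m)) R :=
  Matrix.of fun i j =>
    if (i : ℕ) < n then
      (if (i : ℕ) ≤ (j : ℕ) ∧ (j : ℕ) ≤ (i : ℕ) + m then A.coeff ((j : ℕ) - (i : ℕ)) else 0)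
    else
      (if (i : ℕ) - n ≤ (j : ℕ) ∧ (j : ℕ) ≤ ((i : ℕ) - n) + n then
        B.coeff ((j : ℕ) - ((i : ℕ) - n)) else 0)

/-- The resultant of `A` and `B` of degrees `m`, `n`: the determinant of their
Sylvester matrix. -/
noncomputable def resultant {R : Type*} [CommRing R] (A B : R[X]) (m n : ℕ) : R :=
  (sylvesterMatrix A B m n).det

theorem abs_resultant_le (m n : ℕ) (A B : ℂ[X])
    (hA : A.natDegree = m) (hB : B.natDegree = n) :
    ‖_root_.resultant A B m n‖ ≤
      (∑ i ∈ Finset.range (m + 1), ‖A.coeff i‖ ^ 2) ^ ((n : ℝ) / 2) *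
        (∑ j ∈ Finset.range (n + 1), ‖B.coeff j‖ ^ 2) ^ ((m : ℝ) / 2) := by
  set S := sylvesterMatrix A B m n with hS
  set Ka := ∑ i ∈ Finset.range (m + 1), ‖A.coeff i‖ ^ 2 with hKa
  set Kb := ∑ j ∈ Finset.range (n + 1), ‖B.coeff j‖ ^ 2 with hKb
  have hKa0 : 0 ≤ Ka := Finset.sum_nonneg fun i _ => sq_nonneg _
  have hKb0 : 0 ≤ Kb := Finset.sum_nonneg fun j _ => sq_nonneg _
  -- row sums
  have hrow : ∀ i : Fin (n + m), ∑ j, ‖S i j‖ ^ 2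
      = if (i : ℕ) < n then Ka else Kb := by
    intro i
    by_cases hi : (i : ℕ) < n
    · rw [if_pos hi]
      have : ∀ j : Fin (n + m), ‖S i j‖ ^ 2 =
          (if (i : ℕ) ≤ (j : ℕ) ∧ (j : ℕ) ≤ (i : ℕ) + m then
            ‖A.coeff ((j : ℕ) - (i : ℕ))‖ ^ 2 else 0) := by
        intro j
        simp only [hS, sylvesterMatrix, Matrix.of_apply, if_pos hi]
        split_ifs <;> simp
      rw [Finset.sum_congr rfl fun j _ => this j]
      exact rowsum_aux (fun k => ‖A.coeff k‖ ^ 2) i m (by omega)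
    · rw [if_neg hi]
      push_neg at hi
      have him : (i : ℕ) - n < m := by have := i.2; omega
      have : ∀ j : Fin (n + m), ‖S i j‖ ^ 2 =
          (if (i : ℕ) - n ≤ (j : ℕ) ∧ (j : ℕ) ≤ ((i : ℕ) - n) + n then
            ‖B.coeff ((j : ℕ) - ((i : ℕ) - n))‖ ^ 2 else 0) := by
        intro j
        simp only [hS, sylvesterMatrix, Matrix.of_apply, if_neg (not_lt.mpr hi)]
        split_ifs <;> simp
      rw [Finset.sum_congr rfl fun j _ => this j]
      exact rowsum_aux (fun k => ‖B.coeff k‖ ^ 2) ((i : ℕ) - n) n (by omega)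
  -- product of row sums
  have hprod : ∏ i : Fin (n + m), ∑ j, ‖S i j‖ ^ 2 = Ka ^ n * Kb ^ m := by
    rw [Finset.prod_congr rfl fun i _ => hrow i]
    rw [Fin.prod_univ_eq_prod_range (fun i => if i < n then Ka else Kb) (n + m),
      Finset.prod_range_add]
    congr 1
    · rw [Finset.prod_congr rfl fun i hi => if_pos (Finset.mem_range.mp hi)]
      simp
    · rw [Finset.prod_congr rfl fun i _ => if_neg (by omega)]
      simp
  have had := hadamard_ineq S
  rw [hprod] at had
  rw [_root_.resultant, ← hS]
  clear_value S Ka Kb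
  -- conclude via rpow
  have h1 : ‖S.det‖ = (‖S.det‖ ^ 2) ^ ((1 : ℝ) / 2) := by
    rw [← Real.rpow_natCast (‖S.det‖) 2, ← Real.rpow_mul (by positivity)]
    norm_num
  rw [h1]
  calc (‖S.det‖ ^ 2) ^ ((1 : ℝ) / 2) ≤ (Ka ^ n * Kb ^ m) ^ ((1 : ℝ) / 2) :=
        Real.rpow_le_rpow (by positivity) had (by norm_num)
    _ = Ka ^ ((n : ℝ) / 2) * Kb ^ ((m : ℝ) / 2) := by
        rw [Real.mul_rpow (by positivity) (by positivity),
          ← Real.rpow_natCast Ka n, ← Real.rpow_natCast Kb m,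
          ← Real.rpow_mul hKa0, ← Real.rpow_mul hKb0, mul_one_div, mul_one_div]
end

section
/- Let ψ_n be the division polynomials of the Legendre curve E_λ : Y² = X(X−1)(X−λ). Then for every ε > 0 there is a constant c(ε) such that the height satisfies h(ψ_n) ≤ c(ε) n^{2+ε} for all n ≥ 1, i.e., h(ψ_n) ≤ n^{2+o(1)}. -/
open MvPolynomial

/-- The polynomial ring `ℤ[λ, X, Y]`, with `λ, X, Y` the variables `0, 1, 2`. -/
abbrev R3 := MvPolynomial (Fin 3) ℤ

noncomputable def lamP : R3 := X 0
noncomputable def XP : R3 := X 1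
noncomputable def YP : R3 := X 2

/-- The height of an integer multivariate polynomial: the logarithm of the maximum of the
absolute values of its coefficients. -/
noncomputable def mvHeight (G : R3) : ℝ :=
  Real.log ((G.support.sup fun m => (G.coeff m).natAbs : ℕ) : ℝ)

/-! ### Auxiliary material: the ℓ¹-size of a polynomial -/

/-- The sum of the absolute values of the coefficients. -/
noncomputable def SS (p : R3) : ℕ := ∑ m ∈ p.support, (p.coeff m).natAbs

lemma sum_le_of_ne_zero_mem {α : Type*} [DecidableEq α] {f : α → ℕ} {t u : Finset α}
    (h : ∀ x ∈ t, f x ≠ 0 → x ∈ u) : ∑ x ∈ t, f x ≤ ∑ x ∈ u, f x := by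
  classical
  rw [← Finset.sum_filter_ne_zero (s := t) (f := f)]
  apply Finset.sum_le_sum_of_subset
  intro x hx
  simp only [Finset.mem_filter] at hx
  exact h x hx.1 hx.2

lemma sum_natAbs_le_SS (p : R3) (t : Finset (Fin 3 →₀ ℕ)) :
    ∑ m ∈ t, (p.coeff m).natAbs ≤ SS p := by
  apply sum_le_of_ne_zero_mem
  intro m _ hm
  rw [MvPolynomial.mem_support_iff]
  intro h
  exact hm (by simp [h])

lemma natAbs_sum_le {α : Type*} (s : Finset α) (f : α → ℤ) :
    (∑ x ∈ s, f x).natAbs ≤ ∑ x ∈ s, (f x).natAbs := by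
  have h := Finset.abs_sum_le_sum_abs f s
  have h2 : ((∑ x ∈ s, f x).natAbs : ℤ) ≤ ((∑ x ∈ s, (f x).natAbs : ℕ) : ℤ) := by
    push_cast [Int.natCast_natAbs]
    exact h
  exact_mod_cast h2

lemma SS_sub (p q : R3) : SS (p - q) ≤ SS p + SS q := by
  classical
  calc SS (p - q) ≤ ∑ m ∈ (p - q).support, ((p.coeff m).natAbs + (q.coeff m).natAbs) := by
        apply Finset.sum_le_sum
        intro m _
        rw [MvPolynomial.coeff_sub]
        exact Int.natAbs_sub_le _ _
    _ = ∑ m ∈ (p - q).support, (p.coeff m).natAbs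
        + ∑ m ∈ (p - q).support, (q.coeff m).natAbs := Finset.sum_add_distrib
    _ ≤ SS p + SS q := Nat.add_le_add (sum_natAbs_le_SS _ _) (sum_natAbs_le_SS _ _)

lemma SS_neg (q : R3) : SS (-q) = SS q := by
  simp [SS, MvPolynomial.support_neg]

lemma SS_add (p q : R3) : SS (p + q) ≤ SS p + SS q := by
  have h := SS_sub p (-q)
  rw [sub_neg_eq_add, SS_neg] at h
  exact h

lemma SS_mul (p q : R3) : SS (p * q) ≤ SS p * SS q := by
  classical
  have step1 : SS (p * q) ≤ ∑ n ∈ (p * q).support,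
      ∑ x ∈ Finset.HasAntidiagonal.antidiagonal n, (p.coeff x.1).natAbs * (q.coeff x.2).natAbs := by
    apply Finset.sum_le_sum
    intro n _
    rw [MvPolynomial.coeff_mul]
    calc (∑ x ∈ Finset.HasAntidiagonal.antidiagonal n, coeff x.1 p * coeff x.2 q).natAbs
        ≤ ∑ x ∈ Finset.HasAntidiagonal.antidiagonal n, (coeff x.1 p * coeff x.2 q).natAbs :=
          natAbs_sum_le _ _
      _ = ∑ x ∈ Finset.HasAntidiagonal.antidiagonal n, (p.coeff x.1).natAbs * (q.coeff x.2).natAbs := by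
          apply Finset.sum_congr rfl
          intro x _
          exact Int.natAbs_mul _ _
  have step2 : ∑ n ∈ (p * q).support,
      ∑ x ∈ Finset.HasAntidiagonal.antidiagonal n, (p.coeff x.1).natAbs * (q.coeff x.2).natAbs
      ≤ SS p * SS q := by
    rw [Finset.sum_sigma']
    set F : (Fin 3 →₀ ℕ) × (Fin 3 →₀ ℕ) → ℕ :=
      fun x => (p.coeff x.1).natAbs * (q.coeff x.2).natAbs with hF
    have hinj : ∀ a ∈ (p * q).support.sigma (fun n => Finset.HasAntidiagonal.antidiagonal n),
        ∀ b ∈ (p * q).support.sigma (fun n => Finset.HasAntidiagonal.antidiagonal n),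
        a.2 = b.2 → a = b := by
      intro a ha b hb hab
      simp only [Finset.mem_sigma, Finset.HasAntidiagonal.mem_antidiagonal] at ha hb
      have h1 : a.1 = b.1 := by rw [← ha.2, ← hb.2, hab]
      exact Sigma.ext h1 (heq_of_eq hab)
    calc ∑ s ∈ (p * q).support.sigma (fun n => Finset.HasAntidiagonal.antidiagonal n), F s.2
        = ∑ x ∈ ((p * q).support.sigma fun n => Finset.HasAntidiagonal.antidiagonal n).image
            (fun s => s.2), F x := by
          rw [Finset.sum_image hinj]
      _ ≤ ∑ x ∈ p.support ×ˢ q.support, F x := by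
          apply sum_le_of_ne_zero_mem
          intro x _ hx
          simp only [hF, Nat.mul_ne_zero_iff, Int.natAbs_ne_zero] at hx
          simp [Finset.mem_product, MvPolynomial.mem_support_iff, hx.1, hx.2]
      _ = SS p * SS q := by
          rw [SS, SS, Finset.sum_mul_sum]
          rw [Finset.sum_product]
  exact le_trans step1 step2

lemma coeff_two_Y_mul (p : R3) (m : Fin 3 →₀ ℕ) :
    coeff (Finsupp.single 2 1 + m) (2 * YP * p) = 2 * coeff m p := by
  have h : 2 * YP * p = X 2 * (2 * p) := by rw [YP]; ring
  rw [h, MvPolynomial.coeff_X_mul]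
  have h2 : (2 : R3) = C 2 := by norm_num
  rw [h2, MvPolynomial.coeff_C_mul]

lemma SS_monomial (m : Fin 3 →₀ ℕ) (c : ℤ) : SS (monomial m c) ≤ c.natAbs := by
  classical
  rw [SS, MvPolynomial.support_monomial]
  split
  · simp
  · simp [MvPolynomial.coeff_monomial]

lemma SS_C (c : ℤ) : SS (C c) ≤ c.natAbs := SS_monomial _ _

lemma SS_X (i : Fin 3) : SS (X i : R3) ≤ 1 := by
  have h : (X i : R3) = monomial (Finsupp.single i 1) 1 := by rw [MvPolynomial.X]
  rw [h]
  exact SS_monomial _ _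

lemma SS_one : SS (1 : R3) ≤ 1 := by simpa using SS_C 1

lemma SS_Ymul (p : R3) : SS p ≤ SS (2 * YP * p) := by
  classical
  calc SS p ≤ ∑ m ∈ p.support, ((2 * YP * p).coeff (Finsupp.single 2 1 + m)).natAbs := by
        apply Finset.sum_le_sum
        intro m _
        rw [coeff_two_Y_mul, Int.natAbs_mul]
        have h2 : (2 : ℤ).natAbs = 2 := rfl
        rw [h2]
        omega
    _ = ∑ x ∈ p.support.image (fun m => Finsupp.single 2 1 + m),
          ((2 * YP * p).coeff x).natAbs := by
        rw [Finset.sum_image]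
        intro a _ b _ hab
        exact (add_right_injective _) hab
    _ ≤ SS (2 * YP * p) := by
        apply sum_le_of_ne_zero_mem
        intro x _ hx
        rw [MvPolynomial.mem_support_iff]
        intro h
        rw [h] at hx
        simp at hx

lemma SS_pow (p : R3) (n : ℕ) : SS (p ^ n) ≤ SS p ^ n := by
  induction n with
  | zero => simpa using SS_one
  | succ k ih =>
    calc SS (p ^ (k + 1)) = SS (p ^ k * p) := by rw [pow_succ]
      _ ≤ SS (p ^ k) * SS p := SS_mul _ _
      _ ≤ SS p ^ k * SS p := Nat.mul_le_mul_right _ ih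
      _ = SS p ^ (k + 1) := (pow_succ _ _).symm

lemma sup_le_SS (p : R3) : (p.support.sup fun m => (p.coeff m).natAbs) ≤ SS p :=
  Finset.sup_le fun m hm =>
    Finset.single_le_sum (f := fun m => (p.coeff m).natAbs) (fun _ _ => Nat.zero_le _) hm

/-- The exponent bound. -/
def EB (n : ℕ) : ℕ := 3 * n ^ 2 - 11

lemma EB_le (n : ℕ) : EB n ≤ 3 * n ^ 2 := Nat.sub_le _ _

lemma two_pow_add_le {a b c : ℕ} (ha : a + 1 ≤ c) (hb : b + 1 ≤ c) :
    2 ^ a + 2 ^ b ≤ 2 ^ c := by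
  have hc : 1 ≤ c := le_trans (Nat.le_add_left 1 a) ha
  calc 2 ^ a + 2 ^ b ≤ 2 ^ (c - 1) + 2 ^ (c - 1) :=
        Nat.add_le_add (Nat.pow_le_pow_right (by norm_num) (by omega))
          (Nat.pow_le_pow_right (by norm_num) (by omega))
    _ = 2 ^ (c - 1 + 1) := by rw [pow_succ]; omega
    _ = 2 ^ c := by congr 1; omega

lemma EB_odd1 (k : ℕ) (hk : 2 ≤ k) : EB (k + 2) + 3 * EB k + 1 ≤ EB (2 * k + 1) := by
  obtain ⟨j, rfl⟩ := Nat.exists_eq_add_of_le hk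
  simp only [EB]
  have e1 : (2 + j + 2) ^ 2 = j * j + 8 * j + 16 := by ring
  have e2 : (2 + j) ^ 2 = j * j + 4 * j + 4 := by ring
  have e3 : (2 * (2 + j) + 1) ^ 2 = 4 * (j * j) + 20 * j + 25 := by ring
  rw [e1, e2, e3]
  omega

lemma EB_odd2 (k : ℕ) (hk : 2 ≤ k) : EB (k - 1) + 3 * EB (k + 1) + 1 ≤ EB (2 * k + 1) := by
  obtain ⟨j, rfl⟩ := Nat.exists_eq_add_of_le hk
  have h1 : 2 + j - 1 = j + 1 := by omega
  rw [h1]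
  simp only [EB]
  have e1 : (j + 1) ^ 2 = j * j + 2 * j + 1 := by ring
  have e2 : (2 + j + 1) ^ 2 = j * j + 6 * j + 9 := by ring
  have e3 : (2 * (2 + j) + 1) ^ 2 = 4 * (j * j) + 20 * j + 25 := by ring
  rw [e1, e2, e3]
  omega

lemma EB_even1 (k : ℕ) (hk : 3 ≤ k) :
    EB k + (EB (k + 2) + 2 * EB (k - 1)) + 1 ≤ EB (2 * k) := by
  obtain ⟨j, rfl⟩ := Nat.exists_eq_add_of_le hk
  have h1 : 3 + j - 1 = j + 2 := by omega
  rw [h1]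
  simp only [EB]
  have e1 : (3 + j) ^ 2 = j * j + 6 * j + 9 := by ring
  have e2 : (3 + j + 2) ^ 2 = j * j + 10 * j + 25 := by ring
  have e3 : (j + 2) ^ 2 = j * j + 4 * j + 4 := by ring
  have e4 : (2 * (3 + j)) ^ 2 = 4 * (j * j) + 24 * j + 36 := by ring
  rw [e1, e2, e3, e4]
  omega

lemma EB_even2 (k : ℕ) (hk : 3 ≤ k) :
    EB k + (EB (k - 2) + 2 * EB (k + 1)) + 1 ≤ EB (2 * k) := by
  obtain ⟨j, rfl⟩ := Nat.exists_eq_add_of_le hk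
  have h1 : 3 + j - 2 = j + 1 := by omega
  rw [h1]
  simp only [EB]
  have e1 : (3 + j) ^ 2 = j * j + 6 * j + 9 := by ring
  have e2 : (j + 1) ^ 2 = j * j + 2 * j + 1 := by ring
  have e3 : (3 + j + 1) ^ 2 = j * j + 8 * j + 16 := by ring
  have e4 : (2 * (3 + j)) ^ 2 = 4 * (j * j) + 24 * j + 36 := by ring
  rw [e1, e2, e3, e4]
  omega

/-- The height of the `n`-th division polynomial of the Legendre curve
`E_λ : Y² = X(X-1)(X-λ)` is at most `n^{2+o(1)}`: for every `ε > 0` there is a constant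
`c(ε)` with `h(ψ_n) ≤ c(ε) n^{2+ε}` for all `n ≥ 1`. (The even-index recursion is stated
multiplied through by `2Y`.) -/
theorem divisionPolynomial_height_le (ψ : ℕ → R3)
    (h0 : ψ 0 = 0) (h1 : ψ 1 = 1) (h2 : ψ 2 = 2 * YP)
    (h3 : ψ 3 = 3 * XP ^ 4 - 4 * (1 + lamP) * XP ^ 3 + 6 * lamP * XP ^ 2 - lamP ^ 2)
    (h4 : ψ 4 = 2 * YP * (2 * XP ^ 6 - 4 * (1 + lamP) * XP ^ 5 + 10 * lamP * XP ^ 4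
      - 10 * lamP ^ 2 * XP ^ 2 + 4 * lamP ^ 2 * (1 + lamP) * XP - 2 * lamP ^ 3))
    (hodd : ∀ k : ℕ, 2 ≤ k →
      ψ (2 * k + 1) = ψ (k + 2) * ψ k ^ 3 - ψ (k - 1) * ψ (k + 1) ^ 3)
    (heven : ∀ k : ℕ, 2 ≤ k →
      2 * YP * ψ (2 * k) =
        ψ k * (ψ (k + 2) * ψ (k - 1) ^ 2 - ψ (k - 2) * ψ (k + 1) ^ 2)) :
    ∀ ε : ℝ, 0 < ε → ∃ c : ℝ, 0 < c ∧ ∀ n : ℕ, 1 ≤ n →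
      mvHeight (ψ n) ≤ c * (n : ℝ) ^ (2 + ε) := by
  -- Auxiliary bounds on the pieces of ψ₃ and ψ₄
  have hSX : SS XP ≤ 1 := SS_X 1
  have hSlam : SS lamP ≤ 1 := SS_X 0
  have hSY : SS YP ≤ 1 := SS_X 2
  have hnum : ∀ a : ℤ, ∀ p : R3, SS (C a * p) ≤ a.natAbs * SS p := fun a p =>
    le_trans (SS_mul _ _) (Nat.mul_le_mul_right _ (SS_C a))
  -- key induction
  have key : ∀ n : ℕ, SS (ψ n) ≤ 2 ^ EB n := by
    intro n
    induction n using Nat.strong_induction_on with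
    | _ n ih =>
      match n, ih with
      | 0, _ => rw [h0]; simp [SS, EB]
      | 1, _ => rw [h1]; simpa [EB] using SS_one
      | 2, _ =>
        rw [h2]
        have : SS (2 * YP) ≤ 2 := by
          have h2' : (2 : R3) = C 2 := by norm_num
          calc SS (2 * YP) = SS (C 2 * YP) := by rw [h2']
            _ ≤ (2 : ℤ).natAbs * SS YP := hnum 2 YP
            _ ≤ 2 * 1 := Nat.mul_le_mul_left _ hSY
            _ = 2 := by norm_num
        calc SS (2 * YP) ≤ 2 := this
          _ ≤ 2 ^ EB 2 := by norm_num [EB]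
      | 3, _ =>
        rw [h3]
        have b1 : SS (3 * XP ^ 4 : R3) ≤ 3 := by
          have hc : (3 : R3) = C 3 := by norm_num
          calc SS (3 * XP ^ 4 : R3) = SS (C 3 * XP ^ 4) := by rw [hc]
            _ ≤ (3 : ℤ).natAbs * SS (XP ^ 4) := hnum _ _
            _ ≤ 3 * (SS XP ^ 4) := Nat.mul_le_mul_left _ (SS_pow _ _)
            _ ≤ 3 * 1 ^ 4 := by
                exact Nat.mul_le_mul_left _ (Nat.pow_le_pow_left hSX _)
            _ = 3 := by norm_num
        have b2 : SS (4 * (1 + lamP) * XP ^ 3 : R3) ≤ 8 := by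
          have hc : (4 : R3) = C 4 := by norm_num
          have h1l : SS (1 + lamP) ≤ 2 := by
            calc SS (1 + lamP) ≤ SS 1 + SS lamP := SS_add _ _
              _ ≤ 1 + 1 := Nat.add_le_add SS_one hSlam
          calc SS (4 * (1 + lamP) * XP ^ 3 : R3) = SS (C 4 * ((1 + lamP) * XP ^ 3)) := by
                rw [hc]; ring_nf
            _ ≤ (4 : ℤ).natAbs * SS ((1 + lamP) * XP ^ 3) := hnum _ _
            _ ≤ 4 * (SS (1 + lamP) * SS (XP ^ 3)) :=
                Nat.mul_le_mul_left _ (SS_mul _ _)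
            _ ≤ 4 * (2 * 1) := by
                apply Nat.mul_le_mul_left
                exact Nat.mul_le_mul h1l (le_trans (SS_pow _ _) (Nat.pow_le_pow_left hSX _))
            _ = 8 := by norm_num
        have b3 : SS (6 * lamP * XP ^ 2 : R3) ≤ 6 := by
          have hc : (6 : R3) = C 6 := by norm_num
          calc SS (6 * lamP * XP ^ 2 : R3) = SS (C 6 * (lamP * XP ^ 2)) := by
                rw [hc]; ring_nf
            _ ≤ (6 : ℤ).natAbs * SS (lamP * XP ^ 2) := hnum _ _
            _ ≤ 6 * (SS lamP * SS (XP ^ 2)) := Nat.mul_le_mul_left _ (SS_mul _ _)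
            _ ≤ 6 * (1 * 1) := by
                apply Nat.mul_le_mul_left
                exact Nat.mul_le_mul hSlam (le_trans (SS_pow _ _) (Nat.pow_le_pow_left hSX _))
            _ = 6 := by norm_num
        have b4 : SS (lamP ^ 2 : R3) ≤ 1 := by
          calc SS (lamP ^ 2 : R3) ≤ SS lamP ^ 2 := SS_pow _ _
            _ ≤ 1 ^ 2 := Nat.pow_le_pow_left hSlam _
            _ = 1 := one_pow 2
        calc SS (3 * XP ^ 4 - 4 * (1 + lamP) * XP ^ 3 + 6 * lamP * XP ^ 2 - lamP ^ 2 : R3)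
            ≤ SS (3 * XP ^ 4 - 4 * (1 + lamP) * XP ^ 3 + 6 * lamP * XP ^ 2 : R3)
              + SS (lamP ^ 2 : R3) := SS_sub _ _
          _ ≤ (SS (3 * XP ^ 4 - 4 * (1 + lamP) * XP ^ 3 : R3)
              + SS (6 * lamP * XP ^ 2 : R3)) + SS (lamP ^ 2 : R3) :=
              Nat.add_le_add_right (SS_add _ _) _
          _ ≤ ((SS (3 * XP ^ 4 : R3) + SS (4 * (1 + lamP) * XP ^ 3 : R3))
              + SS (6 * lamP * XP ^ 2 : R3)) + SS (lamP ^ 2 : R3) :=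
              Nat.add_le_add_right (Nat.add_le_add_right (SS_sub _ _) _) _
          _ ≤ ((3 + 8) + 6) + 1 := by
              exact Nat.add_le_add (Nat.add_le_add (Nat.add_le_add b1 b2) b3) b4
          _ ≤ 2 ^ EB 3 := by norm_num [EB]
      | 4, _ =>
        rw [h4]
        set G : R3 := 2 * XP ^ 6 - 4 * (1 + lamP) * XP ^ 5 + 10 * lamP * XP ^ 4
          - 10 * lamP ^ 2 * XP ^ 2 + 4 * lamP ^ 2 * (1 + lamP) * XP - 2 * lamP ^ 3 with hG
        have h1l : SS (1 + lamP) ≤ 2 := by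
          calc SS (1 + lamP) ≤ SS 1 + SS lamP := SS_add _ _
            _ ≤ 1 + 1 := Nat.add_le_add SS_one hSlam
        have hlp : ∀ k : ℕ, SS (lamP ^ k) ≤ 1 := fun k =>
          le_trans (SS_pow _ _) (le_trans (Nat.pow_le_pow_left hSlam _) (by norm_num))
        have hxp : ∀ k : ℕ, SS (XP ^ k) ≤ 1 := fun k =>
          le_trans (SS_pow _ _) (le_trans (Nat.pow_le_pow_left hSX _) (by norm_num))
        have t1 : SS (2 * XP ^ 6 : R3) ≤ 2 := by
          have hc : (2 : R3) = C 2 := by norm_num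
          calc SS (2 * XP ^ 6 : R3) = SS (C 2 * XP ^ 6) := by rw [hc]
            _ ≤ (2:ℤ).natAbs * SS (XP ^ 6) := hnum _ _
            _ ≤ (2:ℤ).natAbs * 1 := Nat.mul_le_mul_left _ (hxp 6)
            _ ≤ 2 := by norm_num
        have t2 : SS (4 * (1 + lamP) * XP ^ 5 : R3) ≤ 8 := by
          have hc : (4 : R3) = C 4 := by norm_num
          calc SS (4 * (1 + lamP) * XP ^ 5 : R3) = SS (C 4 * ((1 + lamP) * XP ^ 5)) := by
                rw [hc]; ring_nf
            _ ≤ (4:ℤ).natAbs * SS ((1 + lamP) * XP ^ 5) := hnum _ _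
            _ ≤ (4:ℤ).natAbs * (SS (1 + lamP) * SS (XP ^ 5)) := Nat.mul_le_mul_left _ (SS_mul _ _)
            _ ≤ (4:ℤ).natAbs * (2 * 1) := Nat.mul_le_mul_left _ (Nat.mul_le_mul h1l (hxp 5))
            _ ≤ 8 := by norm_num
        have t3 : SS (10 * lamP * XP ^ 4 : R3) ≤ 10 := by
          have hc : (10 : R3) = C 10 := by norm_num
          calc SS (10 * lamP * XP ^ 4 : R3) = SS (C 10 * (lamP * XP ^ 4)) := by
                rw [hc]; ring_nf
            _ ≤ (10:ℤ).natAbs * SS (lamP * XP ^ 4) := hnum _ _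
            _ ≤ (10:ℤ).natAbs * (SS lamP * SS (XP ^ 4)) := Nat.mul_le_mul_left _ (SS_mul _ _)
            _ ≤ (10:ℤ).natAbs * (1 * 1) := Nat.mul_le_mul_left _ (Nat.mul_le_mul hSlam (hxp 4))
            _ ≤ 10 := by norm_num
        have t4 : SS (10 * lamP ^ 2 * XP ^ 2 : R3) ≤ 10 := by
          have hc : (10 : R3) = C 10 := by norm_num
          calc SS (10 * lamP ^ 2 * XP ^ 2 : R3) = SS (C 10 * (lamP ^ 2 * XP ^ 2)) := by
                rw [hc]; ring_nf
            _ ≤ (10:ℤ).natAbs * SS (lamP ^ 2 * XP ^ 2) := hnum _ _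
            _ ≤ (10:ℤ).natAbs * (SS (lamP ^ 2) * SS (XP ^ 2)) := Nat.mul_le_mul_left _ (SS_mul _ _)
            _ ≤ (10:ℤ).natAbs * (1 * 1) := Nat.mul_le_mul_left _ (Nat.mul_le_mul (hlp 2) (hxp 2))
            _ ≤ 10 := by norm_num
        have t5 : SS (4 * lamP ^ 2 * (1 + lamP) * XP : R3) ≤ 8 := by
          have hc : (4 : R3) = C 4 := by norm_num
          calc SS (4 * lamP ^ 2 * (1 + lamP) * XP : R3)
              = SS (C 4 * (lamP ^ 2 * ((1 + lamP) * XP))) := by rw [hc]; ring_nf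
            _ ≤ (4:ℤ).natAbs * SS (lamP ^ 2 * ((1 + lamP) * XP)) := hnum _ _
            _ ≤ (4:ℤ).natAbs * (SS (lamP ^ 2) * SS ((1 + lamP) * XP)) :=
                Nat.mul_le_mul_left _ (SS_mul _ _)
            _ ≤ (4:ℤ).natAbs * (1 * (SS (1 + lamP) * SS XP)) := by
                apply Nat.mul_le_mul_left
                exact Nat.mul_le_mul (hlp 2) (SS_mul _ _)
            _ ≤ (4:ℤ).natAbs * (1 * (2 * 1)) := by
                apply Nat.mul_le_mul_left
                exact Nat.mul_le_mul le_rfl (Nat.mul_le_mul h1l hSX)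
            _ ≤ 8 := by norm_num
        have t6 : SS (2 * lamP ^ 3 : R3) ≤ 2 := by
          have hc : (2 : R3) = C 2 := by norm_num
          calc SS (2 * lamP ^ 3 : R3) = SS (C 2 * lamP ^ 3) := by rw [hc]
            _ ≤ (2:ℤ).natAbs * SS (lamP ^ 3) := hnum _ _
            _ ≤ (2:ℤ).natAbs * 1 := Nat.mul_le_mul_left _ (hlp 3)
            _ ≤ 2 := by norm_num
        have hGb : SS G ≤ 40 := by
          rw [hG]
          calc SS (2 * XP ^ 6 - 4 * (1 + lamP) * XP ^ 5 + 10 * lamP * XP ^ 4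
              - 10 * lamP ^ 2 * XP ^ 2 + 4 * lamP ^ 2 * (1 + lamP) * XP - 2 * lamP ^ 3 : R3)
              ≤ SS (2 * XP ^ 6 - 4 * (1 + lamP) * XP ^ 5 + 10 * lamP * XP ^ 4
                - 10 * lamP ^ 2 * XP ^ 2 + 4 * lamP ^ 2 * (1 + lamP) * XP : R3)
                + SS (2 * lamP ^ 3 : R3) := SS_sub _ _
            _ ≤ (SS (2 * XP ^ 6 - 4 * (1 + lamP) * XP ^ 5 + 10 * lamP * XP ^ 4
                - 10 * lamP ^ 2 * XP ^ 2 : R3) + SS (4 * lamP ^ 2 * (1 + lamP) * XP : R3))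
                + SS (2 * lamP ^ 3 : R3) := Nat.add_le_add_right (SS_add _ _) _
            _ ≤ ((SS (2 * XP ^ 6 - 4 * (1 + lamP) * XP ^ 5 + 10 * lamP * XP ^ 4 : R3)
                + SS (10 * lamP ^ 2 * XP ^ 2 : R3)) + SS (4 * lamP ^ 2 * (1 + lamP) * XP : R3))
                + SS (2 * lamP ^ 3 : R3) :=
                Nat.add_le_add_right (Nat.add_le_add_right (SS_sub _ _) _) _
            _ ≤ (((SS (2 * XP ^ 6 - 4 * (1 + lamP) * XP ^ 5 : R3)
                + SS (10 * lamP * XP ^ 4 : R3)) + SS (10 * lamP ^ 2 * XP ^ 2 : R3))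
                + SS (4 * lamP ^ 2 * (1 + lamP) * XP : R3)) + SS (2 * lamP ^ 3 : R3) :=
                Nat.add_le_add_right (Nat.add_le_add_right
                  (Nat.add_le_add_right (SS_add _ _) _) _) _
            _ ≤ ((((SS (2 * XP ^ 6 : R3) + SS (4 * (1 + lamP) * XP ^ 5 : R3))
                + SS (10 * lamP * XP ^ 4 : R3)) + SS (10 * lamP ^ 2 * XP ^ 2 : R3))
                + SS (4 * lamP ^ 2 * (1 + lamP) * XP : R3)) + SS (2 * lamP ^ 3 : R3) :=
                Nat.add_le_add_right (Nat.add_le_add_right (Nat.add_le_add_right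
                  (Nat.add_le_add_right (SS_sub _ _) _) _) _) _
            _ ≤ ((((2 + 8) + 10) + 10) + 8) + 2 := by
                exact Nat.add_le_add (Nat.add_le_add (Nat.add_le_add
                  (Nat.add_le_add (Nat.add_le_add t1 t2) t3) t4) t5) t6
            _ = 40 := by norm_num
        have hc2 : (2 : R3) = C 2 := by norm_num
        calc SS (2 * YP * G) = SS (C 2 * (YP * G)) := by rw [hc2]; ring_nf
          _ ≤ (2:ℤ).natAbs * SS (YP * G) := hnum _ _
          _ ≤ (2:ℤ).natAbs * (SS YP * SS G) := Nat.mul_le_mul_left _ (SS_mul _ _)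
          _ ≤ (2:ℤ).natAbs * (1 * 40) := Nat.mul_le_mul_left _ (Nat.mul_le_mul hSY hGb)
          _ ≤ 2 ^ EB 4 := by norm_num [EB]
      | (m + 5), ih =>
        set n := m + 5 with hn
        rcases Nat.even_or_odd n with he | ho
        · -- n = 2k, k ≥ 3
          obtain ⟨k, hk⟩ := he
          have hk' : n = 2 * k := by omega
          have hk3 : 3 ≤ k := by omega
          have hrec := heven k (by omega)
          have i1 : SS (ψ k) ≤ 2 ^ EB k := ih k (by omega)
          have i2 : SS (ψ (k + 2)) ≤ 2 ^ EB (k + 2) := ih (k + 2) (by omega)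
          have i3 : SS (ψ (k - 1)) ≤ 2 ^ EB (k - 1) := ih (k - 1) (by omega)
          have i4 : SS (ψ (k - 2)) ≤ 2 ^ EB (k - 2) := ih (k - 2) (by omega)
          have i5 : SS (ψ (k + 1)) ≤ 2 ^ EB (k + 1) := ih (k + 1) (by omega)
          rw [hk']
          calc SS (ψ (2 * k)) ≤ SS (2 * YP * ψ (2 * k)) := SS_Ymul _
            _ = SS (ψ k * (ψ (k + 2) * ψ (k - 1) ^ 2 - ψ (k - 2) * ψ (k + 1) ^ 2)) := by
                rw [hrec]
            _ ≤ SS (ψ k) * SS (ψ (k + 2) * ψ (k - 1) ^ 2 - ψ (k - 2) * ψ (k + 1) ^ 2) :=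
                SS_mul _ _
            _ ≤ SS (ψ k) * (SS (ψ (k + 2) * ψ (k - 1) ^ 2) + SS (ψ (k - 2) * ψ (k + 1) ^ 2)) :=
                Nat.mul_le_mul_left _ (SS_sub _ _)
            _ ≤ SS (ψ k) * (SS (ψ (k + 2)) * SS (ψ (k - 1)) ^ 2
                + SS (ψ (k - 2)) * SS (ψ (k + 1)) ^ 2) := by
                apply Nat.mul_le_mul_left
                apply Nat.add_le_add
                · exact le_trans (SS_mul _ _)
                    (Nat.mul_le_mul_left _ (SS_pow _ _))
                · exact le_trans (SS_mul _ _)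
                    (Nat.mul_le_mul_left _ (SS_pow _ _))
            _ ≤ 2 ^ EB k * (2 ^ EB (k + 2) * (2 ^ EB (k - 1)) ^ 2
                + 2 ^ EB (k - 2) * (2 ^ EB (k + 1)) ^ 2) := by
                apply Nat.mul_le_mul i1
                apply Nat.add_le_add
                · exact Nat.mul_le_mul i2 (Nat.pow_le_pow_left i3 _)
                · exact Nat.mul_le_mul i4 (Nat.pow_le_pow_left i5 _)
            _ = 2 ^ (EB k + (EB (k + 2) + 2 * EB (k - 1)))
                + 2 ^ (EB k + (EB (k - 2) + 2 * EB (k + 1))) := by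
                rw [Nat.mul_add, ← pow_mul, ← pow_mul, ← pow_add, ← pow_add,
                  ← pow_add, ← pow_add]
                ring_nf
            _ ≤ 2 ^ EB (2 * k) :=
                two_pow_add_le (EB_even1 k hk3) (EB_even2 k hk3)
        · -- n = 2k+1, k ≥ 2
          obtain ⟨k, hk⟩ := ho
          have hk' : n = 2 * k + 1 := by omega
          have hk2 : 2 ≤ k := by omega
          have hrec := hodd k hk2
          have i1 : SS (ψ (k + 2)) ≤ 2 ^ EB (k + 2) := ih (k + 2) (by omega)
          have i2 : SS (ψ k) ≤ 2 ^ EB k := ih k (by omega)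
          have i3 : SS (ψ (k - 1)) ≤ 2 ^ EB (k - 1) := ih (k - 1) (by omega)
          have i4 : SS (ψ (k + 1)) ≤ 2 ^ EB (k + 1) := ih (k + 1) (by omega)
          rw [hk']
          calc SS (ψ (2 * k + 1))
              = SS (ψ (k + 2) * ψ k ^ 3 - ψ (k - 1) * ψ (k + 1) ^ 3) := by rw [hrec]
            _ ≤ SS (ψ (k + 2) * ψ k ^ 3) + SS (ψ (k - 1) * ψ (k + 1) ^ 3) := SS_sub _ _
            _ ≤ SS (ψ (k + 2)) * SS (ψ k) ^ 3 + SS (ψ (k - 1)) * SS (ψ (k + 1)) ^ 3 := by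
                apply Nat.add_le_add
                · exact le_trans (SS_mul _ _) (Nat.mul_le_mul_left _ (SS_pow _ _))
                · exact le_trans (SS_mul _ _) (Nat.mul_le_mul_left _ (SS_pow _ _))
            _ ≤ 2 ^ EB (k + 2) * (2 ^ EB k) ^ 3 + 2 ^ EB (k - 1) * (2 ^ EB (k + 1)) ^ 3 := by
                apply Nat.add_le_add
                · exact Nat.mul_le_mul i1 (Nat.pow_le_pow_left i2 _)
                · exact Nat.mul_le_mul i3 (Nat.pow_le_pow_left i4 _)
            _ = 2 ^ (EB (k + 2) + 3 * EB k) + 2 ^ (EB (k - 1) + 3 * EB (k + 1)) := by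
                rw [← pow_mul, ← pow_mul, ← pow_add, ← pow_add]
                ring_nf
            _ ≤ 2 ^ EB (2 * k + 1) :=
                two_pow_add_le (EB_odd1 k hk2) (EB_odd2 k hk2)
  -- conclude
  intro ε hε
  refine ⟨3 * Real.log 2 + 1, by positivity, ?_⟩
  intro n hn
  have hbound : (ψ n).support.sup (fun m => ((ψ n).coeff m).natAbs) ≤ 2 ^ (3 * n ^ 2) :=
    le_trans (sup_le_SS _) (le_trans (key n) (Nat.pow_le_pow_right (by norm_num) (EB_le n)))
  have hlog : mvHeight (ψ n) ≤ (3 * n ^ 2 : ℕ) * Real.log 2 := by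
    rw [mvHeight]
    have h2 : Real.log (((2 : ℕ) ^ (3 * n ^ 2) : ℕ) : ℝ) = (3 * n ^ 2 : ℕ) * Real.log 2 := by
      push_cast
      rw [Real.log_pow]
      push_cast
      ring
    rcases Nat.eq_zero_or_pos ((ψ n).support.sup fun m => ((ψ n).coeff m).natAbs) with hz | hp
    · rw [hz]
      simp only [Nat.cast_zero, Real.log_zero]
      positivity
    · rw [← h2]
      apply Real.log_le_log
      · exact_mod_cast hp
      · exact_mod_cast hbound
  have hpow : ((n : ℝ)) ^ (2 : ℕ) ≤ (n : ℝ) ^ (2 + ε) := by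
    have h1 : (1 : ℝ) ≤ (n : ℝ) := by exact_mod_cast hn
    calc ((n : ℝ)) ^ (2 : ℕ) = (n : ℝ) ^ ((2 : ℕ) : ℝ) := (Real.rpow_natCast _ _).symm
      _ ≤ (n : ℝ) ^ (2 + ε) := by
          apply Real.rpow_le_rpow_of_exponent_le h1
          push_cast
          linarith
  have hfin : (3 * (n : ℝ) ^ (2 : ℕ)) * Real.log 2 ≤ (3 * Real.log 2 + 1) * (n : ℝ) ^ (2 + ε) := by
    have hlog2 : 0 < Real.log 2 := Real.log_pos (by norm_num)
    have hx : (0 : ℝ) ≤ (n : ℝ) ^ (2 + ε) := Real.rpow_nonneg (Nat.cast_nonneg _) _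
    nlinarith [hpow]
  calc mvHeight (ψ n) ≤ (3 * n ^ 2 : ℕ) * Real.log 2 := hlog
    _ = (3 * (n : ℝ) ^ (2 : ℕ)) * Real.log 2 := by push_cast; ring
    _ ≤ (3 * Real.log 2 + 1) * (n : ℝ) ^ (2 + ε) := hfin
end
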